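/- Let F be an integral domain, let T be a nonempty finite subset of F, and let n ≥ 1. Then the number of matrices A ∈ T^{n×n} (all n² entries belonging to T) for which there exists 1 ≤ k ≤ n−1 such that the bottom-right (n−k) × (n−k) submatrix of A has zero determinant is at most (n(n−1)/2) · |T|^{n²−1}. Consequently, if the entries of A are chosen independently and uniformly at random from T, the probability that all bottom-right square submatrices of A are invertible is at least 1 − n(n−1)/(2|T|). -/

import Mathlib

/-- The bottom-right `(n-k) × (n-k)` submatrix of an `n × n` matrix
(rows and columns `k+1, …, n` in 1-indexed notation). -/
def lowerRight {R : Type*} (n k : ℕ) (hk : k ≤ n) (A : Matrix (Fin n) (Fin n) R) :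
    Matrix (Fin (n - k)) (Fin (n - k)) R :=
  A.submatrix (fun i => ⟨k + i.1, by have := i.isLt; omega⟩)
    (fun j => ⟨k + j.1, by have := j.isLt; omega⟩)

open Matrix Finset

lemma det_affine {F : Type*} [CommRing F] {m : ℕ} (M M' : Matrix (Fin (m+1)) (Fin (m+1)) F)
    (h : ∀ i j : Fin (m+1), (i ≠ 0 ∨ j ≠ 0) → M i j = M' i j) :
    M.det - M'.det = (M 0 0 - M' 0 0) * (M.submatrix Fin.succ Fin.succ).det := by
  have hsub : ∀ j : Fin (m+1), M.submatrix Fin.succ j.succAbove = M'.submatrix Fin.succ j.succAbove := by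
    intro j; ext i j'
    exact h _ _ (Or.inl (Fin.succ_ne_zero i))
  have hss : M.submatrix Fin.succ Fin.succ = M'.submatrix Fin.succ Fin.succ := by
    have := hsub 0; rwa [Fin.succAbove_zero] at this
  rw [hss, Matrix.det_succ_row_zero M, Matrix.det_succ_row_zero M', Fin.sum_univ_succ, Fin.sum_univ_succ]
  have htail : ∀ j : Fin m,
      (-1:F) ^ ((j.succ : Fin (m+1)) : ℕ) * M 0 j.succ * (M.submatrix Fin.succ (Fin.succ j).succAbove).det
      = (-1:F) ^ ((j.succ : Fin (m+1)) : ℕ) * M' 0 j.succ * (M'.submatrix Fin.succ (Fin.succ j).succAbove).det := by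
    intro j; rw [h 0 j.succ (Or.inr (Fin.succ_ne_zero j)), hsub]
  rw [Finset.sum_congr rfl (fun j _ => htail j), hsub 0]
  simp only [Fin.succAbove_zero, Fin.val_zero, pow_zero, one_mul]
  ring

noncomputable def Dd {F : Type*} [CommRing F] (n k : ℕ) (A : Matrix (Fin n) (Fin n) F) : F :=
  if h : k ≤ n then (lowerRight n k h A).det else 1

lemma Dd_eq {F : Type*} [CommRing F] {n k : ℕ} (h : k ≤ n) (A : Matrix (Fin n) (Fin n) F) :
    Dd n k A = (lowerRight n k h A).det := by
  simp [Dd, h]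

lemma key {F : Type*} [CommRing F] [IsDomain F] {n k : ℕ} (hk1 : 1 ≤ k) (hkn : k < n)
    (A A' : Matrix (Fin n) (Fin n) F)
    (hagree : ∀ i j : Fin n, ¬(i.1 = k ∧ j.1 = k) → A i j = A' i j)
    (h0 : Dd n k A = 0) (h0' : Dd n k A' = 0) (h1 : Dd n (k+1) A ≠ 0) : A = A' := by
  set m := n - k - 1 with hm
  have hmk : n - k = m + 1 := by omega
  set e := finCongr hmk with he
  set M := Matrix.reindex e e (lowerRight n k hkn.le A) with hM
  set M' := Matrix.reindex e e (lowerRight n k hkn.le A') with hM'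
  have hMe : ∀ (B : Matrix (Fin n) (Fin n) F) (i j : Fin (m+1)),
      (Matrix.reindex e e (lowerRight n k hkn.le B)) i j
        = B ⟨k + i.1, by omega⟩ ⟨k + j.1, by omega⟩ := by
    intro B i j; rfl
  have hagree' : ∀ i j : Fin (m+1), (i ≠ 0 ∨ j ≠ 0) → M i j = M' i j := by
    intro i j hij
    rw [hM, hM', hMe, hMe]
    apply hagree
    rintro ⟨hi, hj⟩
    have hi' : k + i.1 = k := hi
    have hj' : k + j.1 = k := hj
    rcases hij with h | h
    · exact h (Fin.ext (by simp only [Fin.val_zero]; omega))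
    · exact h (Fin.ext (by simp only [Fin.val_zero]; omega))
  have haff := det_affine M M' hagree'
  have hdM : M.det = 0 := by
    rw [hM, Matrix.det_reindex_self, ← Dd_eq hkn.le]; exact h0
  have hdM' : M'.det = 0 := by
    rw [hM', Matrix.det_reindex_self, ← Dd_eq hkn.le]; exact h0'
  have hminor : (M.submatrix Fin.succ Fin.succ).det = Dd n (k+1) A := by
    have : M.submatrix Fin.succ Fin.succ = lowerRight n (k+1) (by omega) A := by
      ext i j
      have e1 : M.submatrix Fin.succ Fin.succ i j
          = A ⟨k + (i.1+1), by omega⟩ ⟨k + (j.1+1), by omega⟩ := rfl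
      have e2 : lowerRight n (k+1) (by omega) A i j
          = A ⟨(k+1) + i.1, by omega⟩ ⟨(k+1) + j.1, by omega⟩ := rfl
      rw [e1, e2]
      congr 1 <;> exact Fin.ext (by show k + (_ + 1) = k + 1 + _; omega)
    rw [this, ← Dd_eq (by omega : k + 1 ≤ n)]
  rw [hdM, hdM', hminor, sub_zero] at haff
  have hMeq : M 0 0 = M' 0 0 :=
    sub_eq_zero.mp ((mul_eq_zero.mp haff.symm).resolve_right h1)
  have hkk : A ⟨k, hkn⟩ ⟨k, hkn⟩ = A' ⟨k, hkn⟩ ⟨k, hkn⟩ := by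
    have h1' := hMe A (0 : Fin (m+1)) 0
    have h2' := hMe A' (0 : Fin (m+1)) 0
    rw [hM] at hMeq; rw [hM'] at hMeq
    rw [h1', h2'] at hMeq
    convert hMeq using 2 <;> exact Fin.ext (by simp)
  ext i j
  by_cases hij : i.1 = k ∧ j.1 = k
  · have hi : i = ⟨k, hkn⟩ := Fin.ext hij.1
    have hj : j = ⟨k, hkn⟩ := Fin.ext hij.2
    subst hi; subst hj; exact hkk
  · exact hagree i j hij

open Classical in
lemma card_Ck {F : Type*} [CommRing F] [IsDomain F] (T : Finset F) {t0 : F} (ht0 : t0 ∈ T)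
    {n k : ℕ} (hk1 : 1 ≤ k) (hkn : k < n) :
    ((Fintype.piFinset fun _ : Fin n => Fintype.piFinset fun _ : Fin n => T).filter
      (fun A : Matrix (Fin n) (Fin n) F => Dd n k A = 0 ∧ Dd n (k+1) A ≠ 0)).card
      ≤ T.card ^ (n^2 - 1) := by
  classical
  set kF : Fin n := ⟨k, hkn⟩ with hkF
  set Ωk : Finset (Fin n → Fin n → F) :=
    Fintype.piFinset fun i : Fin n => Fintype.piFinset fun j : Fin n =>
      if i = kF ∧ j = kF then ({t0} : Finset F) else T with hΩk
  have hexp : n - 1 + n * (n - 1) = n ^ 2 - 1 := by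
    obtain ⟨m, rfl⟩ : ∃ m, n = m + 1 := ⟨n - 1, by omega⟩
    simp only [Nat.add_sub_cancel, pow_two]
    ring_nf
    omega
  have hcard : Ωk.card = T.card ^ (n ^ 2 - 1) := by
    rw [hΩk]
    simp only [Fintype.card_piFinset]
    rw [← Finset.mul_prod_erase univ _ (mem_univ kF)]
    have h1 : ∏ j, (if kF = kF ∧ j = kF then ({t0} : Finset F) else T).card
        = T.card ^ (n - 1) := by
      rw [← Finset.mul_prod_erase univ _ (mem_univ kF)]
      rw [Finset.prod_congr rfl (fun j hj => by
        rw [if_neg]; rintro ⟨-, h⟩; exact (Finset.mem_erase.mp hj).1 h)]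
      simp [Finset.prod_const, Finset.card_erase_of_mem]
    have h2 : ∀ i ∈ univ.erase kF,
        ∏ j, (if i = kF ∧ j = kF then ({t0} : Finset F) else T).card = T.card ^ n := by
      intro i hi
      rw [Finset.prod_congr rfl (fun j _ => by
        rw [if_neg]; rintro ⟨h, -⟩; exact (Finset.mem_erase.mp hi).1 h)]
      simp [Finset.prod_const]
    rw [h1, Finset.prod_congr rfl h2, Finset.prod_const]
    simp only [Finset.card_erase_of_mem (mem_univ kF), Finset.card_univ, Fintype.card_fin]
    rw [← pow_mul, ← pow_add, hexp]
  rw [← hcard]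
  apply Finset.card_le_card_of_injOn (fun A i j => if i = kF ∧ j = kF then t0 else A i j)
  · intro A hA
    replace hA := Finset.mem_filter.mp hA
    show (fun i j => if i = kF ∧ j = kF then t0 else A i j) ∈ Ωk; rw [hΩk, Fintype.mem_piFinset]
    intro i
    rw [Fintype.mem_piFinset]
    intro j
    by_cases h : i = kF ∧ j = kF
    · simp [h]
    · simp only [h, if_false]
      exact (Fintype.mem_piFinset.mp ((Fintype.mem_piFinset.mp hA.1) i)) j
  · intro A hA A' hA' hg
    replace hA := Finset.mem_filter.mp hA; replace hA' := Finset.mem_filter.mp hA'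
    apply key hk1 hkn A A' _ hA.2.1 hA'.2.1 hA.2.2
    intro i j hij
    have hne : ¬(i = kF ∧ j = kF) := by
      rintro ⟨rfl, rfl⟩; exact hij ⟨rfl, rfl⟩
    have := congrFun (congrFun hg i) j
    simpa [hne] using this

open Classical in
lemma card_bad {F : Type*} [CommRing F] [IsDomain F] (T : Finset F) {t0 : F} (ht0 : t0 ∈ T)
    {n : ℕ} (hn : 1 ≤ n) :
    ((Fintype.piFinset fun _ : Fin n => Fintype.piFinset fun _ : Fin n => T).filter
      (fun A : Matrix (Fin n) (Fin n) F => ∃ k, 1 ≤ k ∧ k ≤ n - 1 ∧ Dd n k A = 0)).card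
      ≤ n * (n - 1) / 2 * T.card ^ (n ^ 2 - 1) := by
  classical
  set Ω : Finset (Matrix (Fin n) (Fin n) F) :=
    Fintype.piFinset fun _ : Fin n => Fintype.piFinset fun _ : Fin n => T with hΩ
  have hsub : Ω.filter (fun A => ∃ k, 1 ≤ k ∧ k ≤ n - 1 ∧ Dd n k A = 0) ⊆
      (Finset.Icc 1 (n-1)).biUnion
        (fun k => Ω.filter fun A => Dd n k A = 0 ∧ Dd n (k+1) A ≠ 0) := by
    intro A hA
    rw [Finset.mem_filter] at hA
    obtain ⟨hΩA, k, hk1, hk2, hdet⟩ := hA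
    set Q : ℕ → Prop := fun j => 1 ≤ j ∧ Dd n j A = 0 with hQdef
    set k₀ := Nat.findGreatest Q (n-1) with hk₀
    have hQ : Q k₀ := Nat.findGreatest_spec hk2 ⟨hk1, hdet⟩
    have hk₀le : k₀ ≤ n - 1 := Nat.findGreatest_le _
    have hnext : Dd n (k₀+1) A ≠ 0 := by
      by_cases h : k₀ + 1 ≤ n - 1
      · have hng := Nat.findGreatest_is_greatest (Nat.lt_succ_self k₀) h
        intro hz; exact hng ⟨by omega, hz⟩
      · have hk0 : k₀ + 1 = n := by omega
        rw [hk0, Dd_eq (le_refl n)]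
        haveI : IsEmpty (Fin (n - n)) := by rw [Nat.sub_self]; infer_instance
        rw [Matrix.det_isEmpty]
        exact one_ne_zero
    exact Finset.mem_biUnion.mpr ⟨k₀, Finset.mem_Icc.mpr ⟨hQ.1, hk₀le⟩,
      Finset.mem_filter.mpr ⟨hΩA, hQ.2, hnext⟩⟩
  refine le_trans (Finset.card_le_card hsub) (le_trans Finset.card_biUnion_le ?_)
  have step : ∑ k ∈ Finset.Icc 1 (n-1),
      (Ω.filter fun A => Dd n k A = 0 ∧ Dd n (k+1) A ≠ 0).card
      ≤ ∑ _k ∈ Finset.Icc 1 (n-1), T.card ^ (n ^ 2 - 1) := by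
    refine Finset.sum_le_sum (fun k hk => ?_)
    rw [Finset.mem_Icc] at hk
    exact card_Ck T ht0 hk.1 (by omega)
  refine le_trans step ?_
  rw [Finset.sum_const, Nat.card_Icc, smul_eq_mul]
  apply Nat.mul_le_mul_right
  rcases Nat.lt_or_ge n 2 with h | h
  · interval_cases n <;> simp
  · have h1 : (n - 1 + 1 - 1) * 2 ≤ n * (n - 1) := by
      have := Nat.mul_le_mul_right (n-1) h
      omega
    rw [Nat.le_div_iff_mul_le (by norm_num)]
    omega


/-- Over an integral domain `F` and a nonempty finite set `T ⊆ F`: the number of `n × n`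
matrices with entries in `T` for which some bottom-right `(n-k) × (n-k)` submatrix
(`1 ≤ k ≤ n-1`) is singular is at most `(n(n-1)/2)·|T|^(n²-1)`; consequently, the
proportion of matrices with entries in `T` all of whose bottom-right square submatrices
are invertible is at least `1 - n(n-1)/(2|T|)`. -/
theorem stmt15 (F : Type*) [CommRing F] [IsDomain F]
    (T : Finset F) (hT : T.Nonempty) (n : ℕ) (hn : 1 ≤ n) :
    {A : Matrix (Fin n) (Fin n) F | (∀ i j, A i j ∈ T) ∧
        ∃ k, ∃ _ : 1 ≤ k, ∃ hk2 : k ≤ n - 1,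
          (lowerRight n k (by omega) A).det = 0}.encard
      ≤ ((n * (n - 1) / 2 * T.card ^ (n ^ 2 - 1) : ℕ) : ℕ∞) ∧
    (1 - (n * (n - 1) : ℝ) / (2 * T.card)) ≤
      ({A : Matrix (Fin n) (Fin n) F | (∀ i j, A i j ∈ T) ∧
          ∀ k, 1 ≤ k → ∀ hk2 : k ≤ n - 1, (lowerRight n k (by omega) A).det ≠ 0}.ncard : ℝ) /
        (T.card ^ (n ^ 2) : ℝ) := by
  classical
  obtain ⟨t0, ht0⟩ := hT
  set Ω : Finset (Matrix (Fin n) (Fin n) F) :=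
    Fintype.piFinset fun _ : Fin n => Fintype.piFinset fun _ : Fin n => T with hΩ
  set B := Ω.filter (fun A => ∃ k, 1 ≤ k ∧ k ≤ n - 1 ∧ Dd n k A = 0) with hB
  set G := Ω.filter (fun A => ∀ k, 1 ≤ k → k ≤ n - 1 → Dd n k A ≠ 0) with hG
  have hΩmem : ∀ A : Matrix (Fin n) (Fin n) F, A ∈ Ω ↔ ∀ i j, A i j ∈ T := by
    intro A
    rw [hΩ]; refine Fintype.mem_piFinset.trans ?_
    exact forall_congr' fun i => Fintype.mem_piFinset
  have hBset : {A : Matrix (Fin n) (Fin n) F | (∀ i j, A i j ∈ T) ∧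
      ∃ k, ∃ _ : 1 ≤ k, ∃ hk2 : k ≤ n - 1,
        (lowerRight n k (by omega) A).det = 0} = ↑B := by
    ext A
    simp only [Set.mem_setOf_eq, hB, Finset.coe_filter, Set.mem_setOf_eq]
    constructor
    · rintro ⟨h1, k, hk1, hk2, hdet⟩
      exact ⟨(hΩmem A).mpr h1, k, hk1, hk2, by rw [Dd_eq (by omega : k ≤ n)]; exact hdet⟩
    · rintro ⟨h1, k, hk1, hk2, hdet⟩
      refine ⟨(hΩmem A).mp h1, k, hk1, hk2, ?_⟩
      rw [Dd_eq (by omega : k ≤ n)] at hdet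
      exact hdet
  have hGset : {A : Matrix (Fin n) (Fin n) F | (∀ i j, A i j ∈ T) ∧
      ∀ k, 1 ≤ k → ∀ hk2 : k ≤ n - 1, (lowerRight n k (by omega) A).det ≠ 0} = ↑G := by
    ext A
    simp only [Set.mem_setOf_eq, hG, Finset.coe_filter, Set.mem_setOf_eq]
    constructor
    · rintro ⟨h1, h2⟩
      refine ⟨(hΩmem A).mpr h1, fun k hk1 hk2 => ?_⟩
      rw [Dd_eq (by omega : k ≤ n)]
      exact h2 k hk1 hk2
    · rintro ⟨h1, h2⟩
      refine ⟨(hΩmem A).mp h1, fun k hk1 hk2 => ?_⟩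
      have := h2 k hk1 hk2
      rw [Dd_eq (by omega : k ≤ n)] at this
      exact this
  have hBcard : B.card ≤ n * (n - 1) / 2 * T.card ^ (n ^ 2 - 1) := card_bad T ht0 hn
  have hΩcard : Ω.card = T.card ^ (n ^ 2) := by
    rw [hΩ]
    have : (Fintype.piFinset fun _ : Fin n => Fintype.piFinset fun _ : Fin n => T).card
        = T.card ^ (n * n) := by
      simp [Fintype.card_piFinset, Finset.prod_const, ← pow_mul]
    rw [pow_two]
    exact this
  have hsplit : B.card + G.card = Ω.card := by
    rw [hB, hG]
    rw [← Finset.card_filter_add_card_filter_not (s := Ω)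
      (p := fun A => ∃ k, 1 ≤ k ∧ k ≤ n - 1 ∧ Dd n k A = 0)]
    congr 1
    congr 1
    ext A
    simp only [Finset.mem_filter, not_exists, not_and]
  constructor
  · rw [hBset, Set.encard_coe_eq_coe_finsetCard]
    exact_mod_cast hBcard
  · rw [hGset, Set.ncard_coe_finset]
    have hq1 : 1 ≤ T.card := Finset.card_pos.mpr ⟨t0, ht0⟩
    have hq : (0:ℝ) < (T.card : ℝ) := by exact_mod_cast hq1
    have hqp : (0:ℝ) < (T.card : ℝ) ^ (n ^ 2) := pow_pos hq _
    rw [le_div_iff₀ hqp]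
    have hG' : (G.card : ℝ) = (T.card : ℝ) ^ (n ^ 2) - B.card := by
      have h1 : (B.card : ℝ) + G.card = (T.card : ℝ) ^ (n ^ 2) := by
        exact_mod_cast hsplit.trans hΩcard
      linarith
    rw [hG']
    have hBr : (B.card : ℝ) ≤ ((n * (n - 1) / 2 : ℕ) : ℝ) * (T.card : ℝ) ^ (n ^ 2 - 1) := by
      have := hBcard
      push_cast
      exact_mod_cast this
    have hcast : ((n * (n - 1) / 2 : ℕ) : ℝ) = (n : ℝ) * ((n : ℝ) - 1) / 2 := by
      have h2 : (2:ℕ) ∣ n * (n - 1) := by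
        rcases Nat.even_or_odd n with he | ho
        · exact Dvd.dvd.mul_right he.two_dvd _
        · have : Even (n - 1) := Nat.Odd.sub_odd ho odd_one
          exact Dvd.dvd.mul_left this.two_dvd _
      rw [Nat.cast_div h2 (by norm_num)]
      push_cast [Nat.cast_sub hn]
      ring
    rw [hcast] at hBr
    have hpow : (T.card : ℝ) ^ (n ^ 2) = (T.card : ℝ) * (T.card : ℝ) ^ (n ^ 2 - 1) := by
      rw [← pow_succ']
      congr 1
      have : 1 ≤ n ^ 2 := Nat.one_le_pow _ _ (by omega)
      omega
    have hkey : (↑n * (↑n - 1) / (2 * (T.card:ℝ))) * (T.card : ℝ) ^ (n ^ 2)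
        = ((n:ℝ) * ((n:ℝ) - 1) / 2) * (T.card : ℝ) ^ (n ^ 2 - 1) := by
      rw [hpow]
      field_simp
    have e1 : (1 - ↑n * (↑n - 1) / (2 * (T.card:ℝ))) * (T.card : ℝ) ^ (n ^ 2)
        = (T.card : ℝ) ^ (n ^ 2) - (↑n * (↑n - 1) / (2 * (T.card:ℝ))) * (T.card : ℝ) ^ (n ^ 2) := by
      ring
    rw [e1, hkey]
    linarith
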